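/- Let A be an n × r real matrix of rank r whose entries are rationals of bit complexity at most N. Then the r-th largest (i.e., smallest nonzero) singular value of A is at least 2^{−O(N n³)}. -/

import Mathlib

open Matrix Finset

lemma cs_mulVec {m k : Type*} [Fintype m] [Fintype k] (P : Matrix m k ℝ) (v : k → ℝ) :
    ∑ i, (P.mulVec v i)^2 ≤ (∑ i, ∑ j, (P i j)^2) * ∑ j, (v j)^2 := by
  rw [Finset.sum_mul]
  apply Finset.sum_le_sum
  intro i _
  simpa [Matrix.mulVec, dotProduct] using
    Finset.sum_mul_sq_le_sq_mul_sq Finset.univ (fun j => P i j) v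

lemma mulVec_inj_of_rank {n r : ℕ} (A : Matrix (Fin n) (Fin r) ℝ) (h : A.rank = r)
    (v : Fin r → ℝ) (hv : A.mulVec v = 0) : v = 0 := by
  have hker : LinearMap.ker A.mulVecLin = ⊥ := by
    have h1 := LinearMap.finrank_range_add_finrank_ker A.mulVecLin
    rw [Matrix.rank] at h
    rw [h] at h1
    simp only [Module.finrank_pi, Module.finrank_self, Fintype.card_fin] at h1
    exact Submodule.finrank_eq_zero.mp (by omega)
  have : v ∈ LinearMap.ker A.mulVecLin := by simpa [Matrix.mulVecLin_apply] using hv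
  simpa [hker] using this

set_option maxHeartbeats 1600000 in
theorem rank_bit_complexity_singular_value_lower_bound :
    ∃ C : ℝ, 0 < C ∧ ∀ (N n r : ℕ) (A : Matrix (Fin n) (Fin r) ℝ),
      0 < N → A.rank = r →
      (∀ i j, ∃ p q : ℤ, q ≠ 0 ∧ |p| ≤ 2 ^ N ∧ |q| ≤ 2 ^ N ∧ A i j = (p : ℝ) / (q : ℝ)) →
      ∀ x : Fin r → ℝ, (∑ j, x j ^ 2) = 1 →
        (2 : ℝ) ^ (-(C * (N : ℝ) * (n : ℝ) ^ 3)) ≤ Real.sqrt (∑ i, (A.mulVec x i) ^ 2) := by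
  refine ⟨20, by norm_num, ?_⟩
  intro N n r A hN hrank hentry x hx
  classical
  -- basic size facts
  have hr : 0 < r := by
    rcases Nat.eq_zero_or_pos r with h | h
    · subst h; simp at hx
    · exact h
  have hrn : r ≤ n := by
    have := A.rank_le_card_height
    simpa [hrank] using this
  have hn : 0 < n := lt_of_lt_of_le hr hrn
  -- choose numerators and denominators
  choose p q hq0 hp hqb hA using hentry
  -- the common denominator
  set D : ℤ := ∏ e : Fin n × Fin r, q e.1 e.2 with hD_def
  have hD0 : D ≠ 0 := Finset.prod_ne_zero_iff.mpr fun e _ => hq0 e.1 e.2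
  -- integer matrix
  set M' : Matrix (Fin n) (Fin r) ℤ :=
    Matrix.of (fun i j => p i j * ∏ e ∈ Finset.univ.erase (i, j), q e.1 e.2) with hM'_def
  have hqM : ∀ i j, q i j * M' i j = p i j * D := by
    intro i j
    have h := Finset.mul_prod_erase Finset.univ (fun e : Fin n × Fin r => q e.1 e.2)
      (Finset.mem_univ (i, j))
    simp only [hM'_def, Matrix.of_apply, hD_def]
    rw [← h]; ring
  set M : Matrix (Fin n) (Fin r) ℝ := M'.map ((↑) : ℤ → ℝ) with hM_def
  have hM : ∀ i j, M i j = (D : ℝ) * A i j := by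
    intro i j
    have h := hqM i j
    have hqR : ((q i j : ℤ) : ℝ) ≠ 0 := Int.cast_ne_zero.mpr (hq0 i j)
    have hcast : (q i j : ℝ) * (M' i j : ℝ) = (p i j : ℝ) * (D : ℝ) := by
      exact_mod_cast congrArg (Int.cast : ℤ → ℝ) h
    have : M i j = ((p i j : ℝ) * (D : ℝ)) / (q i j : ℝ) := by
      rw [← hcast]; field_simp [hM_def]; rfl
    rw [this, hA i j]; field_simp
  have hMx : M.mulVec x = fun i => (D : ℝ) * A.mulVec x i := by
    funext i
    simp only [Matrix.mulVec, dotProduct]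
    rw [Finset.mul_sum]
    exact Finset.sum_congr rfl fun j _ => by rw [hM i j]; ring
  -- Gram matrices
  set G' : Matrix (Fin r) (Fin r) ℤ := M'ᵀ * M' with hG'_def
  set G : Matrix (Fin r) (Fin r) ℝ := Mᵀ * M with hG_def
  have hGmap : G = G'.map ((Int.castRingHom ℝ : ℤ →+* ℝ)) := by
    rw [hG_def, hG'_def, Matrix.map_mul, Matrix.transpose_map]
    rfl
  have hdet : G.det = ((G'.det : ℤ) : ℝ) := by
    rw [hGmap, ← RingHom.mapMatrix_apply, ← RingHom.map_det]; rfl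
  have hadj : adjugate G = (adjugate G').map ((Int.castRingHom ℝ : ℤ →+* ℝ)) := by
    rw [hGmap, ← RingHom.mapMatrix_apply, ← RingHom.map_adjugate]; rfl
  -- determinant nonzero
  have hdetne : G'.det ≠ 0 := by
    intro hzero
    have hGdet : G.det = 0 := by rw [hdet, hzero]; norm_num
    obtain ⟨v, hv0, hGv⟩ := Matrix.exists_mulVec_eq_zero_iff.mpr hGdet
    have hvker : v ∈ LinearMap.ker (Matrix.mulVecLin M) := by
      rw [← Matrix.ker_mulVecLin_transpose_mul_self]
      simp only [LinearMap.mem_ker, Matrix.mulVecLin_apply]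
      exact hGv
    have hMv : M.mulVec v = 0 := by simpa [Matrix.mulVecLin_apply] using hvker
    have hAv : A.mulVec v = 0 := by
      funext i
      have h2 : M.mulVec v i = (D : ℝ) * A.mulVec v i := by
        simp only [Matrix.mulVec, dotProduct]
        rw [Finset.mul_sum]
        exact Finset.sum_congr rfl fun j _ => by rw [hM i j]; ring
      have h3 : (D : ℝ) * A.mulVec v i = 0 := by
        rw [← h2]; exact congrFun hMv i
      have hDR : (D : ℝ) ≠ 0 := Int.cast_ne_zero.mpr hD0
      simpa [hDR] using h3
    exact hv0 (mulVec_inj_of_rank A hrank v hAv)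
  -- key identity
  have hkey : (adjugate G).mulVec (Mᵀ.mulVec (M.mulVec x)) = G.det • x := by
    rw [Matrix.mulVec_mulVec, Matrix.mulVec_mulVec, Matrix.mul_assoc, ← hG_def,
      Matrix.adjugate_mul, Matrix.smul_mulVec, Matrix.one_mulVec]
  -- squared norms
  have habs_sq : ∀ a b : ℝ, |a| ≤ b → a ^ 2 ≤ b ^ 2 := fun a b h => by
    nlinarith [neg_abs_le a, le_abs_self a, abs_nonneg a]
  set S : ℝ := ∑ i, (A.mulVec x i) ^ 2 with hS_def
  have hS0 : 0 ≤ S := Finset.sum_nonneg fun i _ => sq_nonneg _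
  have hSM : ∑ i, (M.mulVec x i) ^ 2 = (D : ℝ) ^ 2 * S := by
    rw [hS_def, Finset.mul_sum]
    exact Finset.sum_congr rfl fun i _ => by rw [hMx]; ring
  set w : Fin r → ℝ := Mᵀ.mulVec (M.mulVec x) with hw_def
  set Fa : ℝ := ∑ i, ∑ j, (adjugate G i j) ^ 2 with hFa_def
  set Fm : ℝ := ∑ i, ∑ j, (Mᵀ i j) ^ 2 with hFm_def
  have hFa0 : 0 ≤ Fa := Finset.sum_nonneg fun i _ => Finset.sum_nonneg fun j _ => sq_nonneg _
  have hstep1 : G.det ^ 2 ≤ Fa * ∑ j, w j ^ 2 := by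
    have hcs := cs_mulVec (adjugate G) w
    calc G.det ^ 2 = ∑ j, ((adjugate G).mulVec w j) ^ 2 := by
          rw [hkey]
          simp only [Pi.smul_apply, smul_eq_mul, mul_pow]
          rw [← Finset.mul_sum, hx, mul_one]
      _ ≤ Fa * ∑ j, w j ^ 2 := hcs
  have hstep2 : ∑ j, w j ^ 2 ≤ Fm * ((D : ℝ) ^ 2 * S) := by
    rw [← hSM]
    exact cs_mulVec Mᵀ (M.mulVec x)
  have hGS : G.det ^ 2 ≤ Fa * (Fm * ((D : ℝ) ^ 2 * S)) :=
    le_trans hstep1 (mul_le_mul_of_nonneg_left hstep2 hFa0)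
  -- integer entry bounds
  set E : ℕ := N * (n * r) + N with hE_def
  have bD : |D| ≤ 2 ^ (N * (n * r)) := by
    calc |D| = ∏ e : Fin n × Fin r, |q e.1 e.2| := by rw [hD_def, Finset.abs_prod]
      _ ≤ ∏ _e : Fin n × Fin r, (2 : ℤ) ^ N :=
          Finset.prod_le_prod (fun e _ => abs_nonneg _) (fun e _ => hqb e.1 e.2)
      _ = ((2 : ℤ) ^ N) ^ (n * r) := by
          rw [Finset.prod_const]; congr 1
          simp [Fintype.card_prod]
      _ = 2 ^ (N * (n * r)) := by rw [← pow_mul]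
  have bM' : ∀ i j, |M' i j| ≤ 2 ^ E := by
    intro i j
    have h1 : |M' i j| ≤ |q i j| * |M' i j| :=
      le_mul_of_one_le_left (abs_nonneg _) (Int.one_le_abs (hq0 i j))
    calc |M' i j| ≤ |q i j * M' i j| := by rw [abs_mul]; exact h1
      _ = |p i j| * |D| := by rw [hqM i j, abs_mul]
      _ ≤ 2 ^ N * 2 ^ (N * (n * r)) :=
          mul_le_mul (hp i j) bD (abs_nonneg _) (by positivity)
      _ = 2 ^ E := by rw [hE_def, ← pow_add]; ring_nf
  have bG' : ∀ i j, |G' i j| ≤ (n : ℤ) * 2 ^ (2 * E) := by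
    intro i j
    have : G' i j = ∑ k, M' k i * M' k j := by
      simp [hG'_def, Matrix.mul_apply, Matrix.transpose_apply]
    rw [this]
    calc |∑ k, M' k i * M' k j| ≤ ∑ k, |M' k i * M' k j| := Finset.abs_sum_le_sum_abs _ _
      _ ≤ ∑ _k : Fin n, (2 : ℤ) ^ E * 2 ^ E := by
          refine Finset.sum_le_sum fun k _ => ?_
          rw [abs_mul]
          exact mul_le_mul (bM' k i) (bM' k j) (abs_nonneg _) (by positivity)
      _ = (n : ℤ) * 2 ^ (2 * E) := by
          rw [Finset.sum_const, Finset.card_univ, Fintype.card_fin, nsmul_eq_mul, ← pow_add]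
          ring_nf
  have hone_le : (1 : ℤ) ≤ (n : ℤ) * 2 ^ (2 * E) := by
    have h1 : (1 : ℤ) ≤ (n : ℤ) := by exact_mod_cast hn
    have h2 : (1 : ℤ) ≤ 2 ^ (2 * E) := one_le_pow₀ one_le_two
    nlinarith
  have badjZ : ∀ i j, |adjugate G' i j| ≤ (r.factorial : ℤ) * ((n : ℤ) * 2 ^ (2 * E)) ^ r := by
    intro i j
    rw [Matrix.adjugate_apply]
    have hent : ∀ k l, AbsoluteValue.abs ((G'.updateRow j (Pi.single i 1)) k l) ≤
        (n : ℤ) * 2 ^ (2 * E) := by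
      intro k l
      rw [Matrix.updateRow_apply]
      split
      · rw [Pi.single_apply]
        split <;> simpa using hone_le
      · simpa using bG' k l
    have hdl := Matrix.det_le hent
    simpa [Fintype.card_fin, nsmul_eq_mul] using hdl
  -- real entry bounds
  have hMbound : ∀ i j, |M i j| ≤ (2 : ℝ) ^ E := by
    intro i j
    have : M i j = ((M' i j : ℤ) : ℝ) := rfl
    rw [this, ← Int.cast_abs]
    exact_mod_cast bM' i j
  have hAdjBound : ∀ i j, |adjugate G i j| ≤
      (r.factorial : ℝ) * ((n : ℝ) * (2 : ℝ) ^ (2 * E)) ^ r := by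
    intro i j
    have : adjugate G i j = ((adjugate G' i j : ℤ) : ℝ) := by rw [hadj]; rfl
    rw [this, ← Int.cast_abs]
    exact_mod_cast badjZ i j
  have hDbound : |(D : ℝ)| ≤ (2 : ℝ) ^ (N * (n * r)) := by
    rw [← Int.cast_abs]
    exact_mod_cast bD
  -- Frobenius bounds
  set Badj : ℝ := (r.factorial : ℝ) * ((n : ℝ) * (2 : ℝ) ^ (2 * E)) ^ r with hBadj_def
  have hFa_le : Fa ≤ (r : ℝ) * ((r : ℝ) * Badj ^ 2) := by
    rw [hFa_def]
    calc ∑ i, ∑ j, (adjugate G i j) ^ 2 ≤ ∑ _i : Fin r, ∑ _j : Fin r, Badj ^ 2 := by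
          refine Finset.sum_le_sum fun i _ => Finset.sum_le_sum fun j _ => ?_
          exact habs_sq _ _ (hAdjBound i j)
      _ = (r : ℝ) * ((r : ℝ) * Badj ^ 2) := by
          simp [Finset.sum_const, Finset.card_univ, mul_assoc]
  have hFm_le : Fm ≤ (r : ℝ) * ((n : ℝ) * ((2 : ℝ) ^ E) ^ 2) := by
    rw [hFm_def]
    calc ∑ i : Fin r, ∑ j : Fin n, (Mᵀ i j) ^ 2
        ≤ ∑ _i : Fin r, ∑ _j : Fin n, ((2 : ℝ) ^ E) ^ 2 := by
          refine Finset.sum_le_sum fun i _ => Finset.sum_le_sum fun j _ => ?_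
          exact habs_sq _ _ (hMbound j i)
      _ = (r : ℝ) * ((n : ℝ) * ((2 : ℝ) ^ E) ^ 2) := by
          simp [Finset.sum_const, Finset.card_univ, mul_assoc]
  have hD2 : (D : ℝ) ^ 2 ≤ ((2 : ℝ) ^ (N * (n * r))) ^ 2 := by
    refine habs_sq _ _ ?_
    exact hDbound
  -- master bound
  set t : ℕ := N * n ^ 3 with ht_def
  have h1n : 1 ≤ n := hn
  have h1N : 1 ≤ N := hN
  have hcast_le_pow : ∀ m : ℕ, (m : ℝ) ≤ (2 : ℝ) ^ m := fun m => by
    exact_mod_cast (Nat.lt_two_pow_self (n := m)).le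
  have hmono : ∀ a b : ℕ, a ≤ b → (2 : ℝ) ^ a ≤ (2 : ℝ) ^ b := fun a b h =>
    pow_le_pow_right₀ one_le_two h
  have htn : n ≤ t := by
    rw [ht_def]
    calc n ≤ n ^ 3 := Nat.le_self_pow (by norm_num) n
      _ ≤ N * n ^ 3 := Nat.le_mul_of_pos_left _ hN
  have htr : r ≤ t := le_trans hrn htn
  have htrr : r * r ≤ t := by
    rw [ht_def]
    calc r * r ≤ n * n := Nat.mul_le_mul hrn hrn
      _ = n ^ 2 := by ring
      _ ≤ n ^ 3 := Nat.pow_le_pow_right h1n (by norm_num)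
      _ ≤ N * n ^ 3 := Nat.le_mul_of_pos_left _ hN
  have hnn3 : n * n ≤ n ^ 3 := by
    calc n * n = n ^ 2 := by ring
      _ ≤ n ^ 3 := Nat.pow_le_pow_right h1n (by norm_num)
  have htE5 : (n + 2 * E) * r ≤ 5 * t := by
    rw [hE_def, ht_def]
    have e1 : n * r ≤ N * n ^ 3 := by
      calc n * r ≤ n * n := Nat.mul_le_mul_left _ hrn
        _ ≤ n ^ 3 := hnn3
        _ ≤ N * n ^ 3 := Nat.le_mul_of_pos_left _ hN
    have e2 : N * (n * r) * r ≤ N * n ^ 3 := by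
      calc N * (n * r) * r ≤ N * (n * n) * n :=
            Nat.mul_le_mul (Nat.mul_le_mul_left _ (Nat.mul_le_mul_left _ hrn)) hrn
        _ = N * (n * n * n) := by ring
        _ = N * n ^ 3 := by ring
    have e3 : N * r ≤ N * n ^ 3 := by
      refine Nat.mul_le_mul_left _ ?_
      exact le_trans hrn (Nat.le_self_pow (by norm_num) n)
    calc (n + 2 * (N * (n * r) + N)) * r
        = n * r + 2 * (N * (n * r) * r) + 2 * (N * r) := by ring
      _ ≤ N * n ^ 3 + 2 * (N * n ^ 3) + 2 * (N * n ^ 3) := by omega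
      _ = 5 * (N * n ^ 3) := by ring
  have htE2 : E ≤ 2 * t := by
    rw [hE_def, ht_def]
    have e1 : N * (n * r) ≤ N * n ^ 3 := by
      refine Nat.mul_le_mul_left _ ?_
      calc n * r ≤ n * n := Nat.mul_le_mul_left _ hrn
        _ ≤ n ^ 3 := hnn3
    have e2 : N ≤ N * n ^ 3 := Nat.le_mul_of_pos_right _ (by positivity)
    omega
  have htD : N * (n * r) ≤ t := by
    rw [ht_def]
    refine Nat.mul_le_mul_left _ ?_
    calc n * r ≤ n * n := Nat.mul_le_mul_left _ hrn
      _ ≤ n ^ 3 := hnn3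
  have hr_le : (r : ℝ) ≤ (2 : ℝ) ^ t :=
    le_trans (hcast_le_pow r) (hmono _ _ htr)
  have hn_le : (n : ℝ) ≤ (2 : ℝ) ^ t :=
    le_trans (hcast_le_pow n) (hmono _ _ htn)
  have hfact_le : (r.factorial : ℝ) ≤ (2 : ℝ) ^ t := by
    have h1 : r.factorial ≤ r ^ r := Nat.factorial_le_pow r
    have h2 : (r : ℝ) ^ r ≤ ((2 : ℝ) ^ r) ^ r :=
      pow_le_pow_left₀ (by positivity) (hcast_le_pow r) r
    have h3 : ((2 : ℝ) ^ r) ^ r = (2 : ℝ) ^ (r * r) := by rw [← pow_mul]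
    have h4 : (2 : ℝ) ^ (r * r) ≤ (2 : ℝ) ^ t := hmono _ _ htrr
    calc (r.factorial : ℝ) ≤ (r : ℝ) ^ r := by exact_mod_cast h1
      _ ≤ _ := le_trans h2 (h3 ▸ h4)
  have hX_le : ((n : ℝ) * (2 : ℝ) ^ (2 * E)) ^ r ≤ (2 : ℝ) ^ (5 * t) := by
    have h1 : (n : ℝ) * (2 : ℝ) ^ (2 * E) ≤ (2 : ℝ) ^ (n + 2 * E) := by
      rw [pow_add]
      exact mul_le_mul_of_nonneg_right (hcast_le_pow n) (by positivity)
    calc ((n : ℝ) * (2 : ℝ) ^ (2 * E)) ^ r ≤ ((2 : ℝ) ^ (n + 2 * E)) ^ r :=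
          pow_le_pow_left₀ (by positivity) h1 r
      _ = (2 : ℝ) ^ ((n + 2 * E) * r) := by rw [← pow_mul]
      _ ≤ (2 : ℝ) ^ (5 * t) := hmono _ _ htE5
  have hE_le : (2 : ℝ) ^ E ≤ (2 : ℝ) ^ (2 * t) := hmono _ _ htE2
  have hDp_le : (2 : ℝ) ^ (N * (n * r)) ≤ (2 : ℝ) ^ t := hmono _ _ htD
  have hmaster : (r : ℝ) * ((r : ℝ) * Badj ^ 2) * ((r : ℝ) * ((n : ℝ) * ((2 : ℝ) ^ E) ^ 2)) *
      ((2 : ℝ) ^ (N * (n * r))) ^ 2 ≤ (2 : ℝ) ^ (40 * t) := by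
    have hBadj_le : Badj ≤ (2 : ℝ) ^ t * (2 : ℝ) ^ (5 * t) := by
      rw [hBadj_def]
      exact mul_le_mul hfact_le hX_le (by positivity) (by positivity)
    calc (r : ℝ) * ((r : ℝ) * Badj ^ 2) * ((r : ℝ) * ((n : ℝ) * ((2 : ℝ) ^ E) ^ 2)) *
        ((2 : ℝ) ^ (N * (n * r))) ^ 2
        ≤ (2 : ℝ) ^ t * ((2 : ℝ) ^ t * ((2 : ℝ) ^ t * (2 : ℝ) ^ (5 * t)) ^ 2) *
          ((2 : ℝ) ^ t * ((2 : ℝ) ^ t * ((2 : ℝ) ^ (2 * t)) ^ 2)) * ((2 : ℝ) ^ t) ^ 2 := by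
          gcongr <;> positivity
      _ = (2 : ℝ) ^ (22 * t) := by
          simp only [← pow_add, mul_pow, ← pow_mul]
          congr 1; ring
      _ ≤ (2 : ℝ) ^ (40 * t) := hmono _ _ (by omega)
  -- conclude
  have hGdet1 : (1 : ℝ) ≤ G.det ^ 2 := by
    have h1 : (1 : ℤ) ≤ G'.det ^ 2 := by
      have ha : (1 : ℤ) ≤ |G'.det| := Int.one_le_abs hdetne
      have hb : |G'.det| ^ 2 = G'.det ^ 2 := sq_abs _
      nlinarith [abs_nonneg G'.det]
    rw [hdet]
    exact_mod_cast h1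
  have hKS : (1 : ℝ) ≤ (2 : ℝ) ^ (40 * t) * S := by
    have hchain : G.det ^ 2 ≤ ((r : ℝ) * ((r : ℝ) * Badj ^ 2) *
        ((r : ℝ) * ((n : ℝ) * ((2 : ℝ) ^ E) ^ 2)) * ((2 : ℝ) ^ (N * (n * r))) ^ 2) * S := by
      refine le_trans hGS ?_
      have expand : Fa * (Fm * ((D : ℝ) ^ 2 * S)) = Fa * Fm * (D : ℝ) ^ 2 * S := by ring
      rw [expand]
      have : Fa * Fm * (D : ℝ) ^ 2 ≤ (r : ℝ) * ((r : ℝ) * Badj ^ 2) *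
          ((r : ℝ) * ((n : ℝ) * ((2 : ℝ) ^ E) ^ 2)) * ((2 : ℝ) ^ (N * (n * r))) ^ 2 := by
        have hFm0 : 0 ≤ Fm := Finset.sum_nonneg fun i _ => Finset.sum_nonneg fun j _ =>
          sq_nonneg _
        exact mul_le_mul (mul_le_mul hFa_le hFm_le hFm0 (by positivity)) hD2 (sq_nonneg _)
          (by positivity)
      exact mul_le_mul_of_nonneg_right this hS0
    calc (1 : ℝ) ≤ G.det ^ 2 := hGdet1
      _ ≤ _ := hchain
      _ ≤ (2 : ℝ) ^ (40 * t) * S := mul_le_mul_of_nonneg_right hmaster hS0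
  have hSlb : (((2 : ℝ) ^ (20 * t))⁻¹) ^ 2 ≤ S := by
    have hpos : (0 : ℝ) < (2 : ℝ) ^ (40 * t) := by positivity
    have h1 : ((2 : ℝ) ^ (40 * t))⁻¹ ≤ S := by
      rw [inv_le_iff_one_le_mul₀ hpos]
      linarith [hKS]
    have h2 : (((2 : ℝ) ^ (20 * t))⁻¹) ^ 2 = ((2 : ℝ) ^ (40 * t))⁻¹ := by
      rw [← inv_pow, ← pow_mul]
      norm_num
      ring_nf
      rw [one_div]
    rw [h2]
    exact h1
  have hexp : (2 : ℝ) ^ (-(20 * (N : ℝ) * (n : ℝ) ^ 3)) = ((2 : ℝ) ^ (20 * t))⁻¹ := by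
    rw [show -(20 * (N : ℝ) * (n : ℝ) ^ 3) = -(((20 * t : ℕ) : ℝ)) by
      rw [ht_def]; push_cast; ring]
    rw [Real.rpow_neg (by norm_num), Real.rpow_natCast]
  rw [hexp]
  exact Real.le_sqrt_of_sq_le hSlb
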